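/- Let C > 0 and θ be real numbers with 0 < θ, θ ≤ 1/2, and 2θ ≤ 1/C. Then the function g(x) = (1/C)·H₂(x) − H₂(θx) is concave on the open interval (0,1). -/

import Mathlib

open Real

/-- The binary entropy function `H₂(x) = −x·log₂ x − (1−x)·log₂(1−x)`
(with the conventions `H₂(0) = H₂(1) = 0`, automatic since `Real.log 0 = 0`). -/
noncomputable def binaryEntropy (x : ℝ) : ℝ :=
  -(x * Real.logb 2 x) - (1 - x) * Real.logb 2 (1 - x)

lemma binaryEntropy_eq : binaryEntropy = fun x => Real.binEntropy x / Real.log 2 := by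
  funext x
  simp only [binaryEntropy, Real.binEntropy, Real.logb, Real.log_inv]
  ring

/-- For reals `C > 0` and `0 < θ ≤ 1/2` with `2θ ≤ 1/C`, the function
`g(x) = (1/C)·H₂(x) − H₂(θx)` is concave on `(0,1)`. -/
theorem entropy_difference_concave
    (C θ : ℝ) (hC : 0 < C) (hθ0 : 0 < θ) (hθ1 : θ ≤ 1 / 2) (hθC : 2 * θ ≤ 1 / C) :
    ConcaveOn ℝ (Set.Ioo (0 : ℝ) 1)
      (fun x => (1 / C) * binaryEntropy x - binaryEntropy (θ * x)) := by
  have hL : (0 : ℝ) < Real.log 2 := Real.log_pos (by norm_num)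
  have hint : interior (Set.Ioo (0:ℝ) 1) = Set.Ioo (0:ℝ) 1 := interior_Ioo
  set f' : ℝ → ℝ := fun x =>
    (1 / C) * ((Real.log (1 - x) - Real.log x) / Real.log 2)
      - (Real.log (1 - θ * x) - Real.log (θ * x)) / Real.log 2 * θ with hf'def
  set f'' : ℝ → ℝ := fun x =>
    ((1 / C) * (-(1 - x)⁻¹ - x⁻¹)
      - ((1 - θ * x)⁻¹ * -θ - (θ * x)⁻¹ * θ) * θ) / Real.log 2 with hf''def
  apply concaveOn_of_hasDerivWithinAt2_nonpos (f' := f') (f'' := f'') (convex_Ioo 0 1)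
  · -- continuity
    apply Continuous.continuousOn
    rw [binaryEntropy_eq]
    fun_prop
  · -- first derivative
    rw [hint]
    rintro x ⟨hx0, hx1⟩
    have hθx0 : θ * x ≠ 0 := by positivity
    have hθx1 : θ * x ≠ 1 := by nlinarith
    rw [binaryEntropy_eq]
    have h1 : HasDerivAt (fun y => Real.binEntropy y / Real.log 2)
        ((Real.log (1 - x) - Real.log x) / Real.log 2) x :=
      (Real.hasDerivAt_binEntropy hx0.ne' hx1.ne).div_const _
    have h2 : HasDerivAt (fun x => Real.binEntropy (θ * x) / Real.log 2)
        ((Real.log (1 - θ * x) - Real.log (θ * x)) / Real.log 2 * θ) x :=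
      by
        have hmul : HasDerivAt (fun y : ℝ => θ * y) θ x := by
          simpa using (hasDerivAt_id x).const_mul θ
        exact HasDerivAt.comp x ((Real.hasDerivAt_binEntropy hθx0 hθx1).div_const _) hmul
    exact ((h1.const_mul (1 / C)).sub h2).hasDerivWithinAt
  · -- second derivative
    rw [hint]
    rintro x ⟨hx0, hx1⟩
    have hx1' : (0:ℝ) < 1 - x := by linarith
    have hθx1' : (0:ℝ) < 1 - θ * x := by nlinarith
    have hθx0 : θ * x ≠ 0 := by positivity
    have d1 : HasDerivAt (fun y : ℝ => Real.log (1 - y)) (-(1 - x)⁻¹) x := by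
      have := (Real.hasDerivAt_log hx1'.ne').comp x ((hasDerivAt_id x).const_sub 1)
      simpa [Function.comp_def] using this
    have d2 : HasDerivAt Real.log x⁻¹ x := Real.hasDerivAt_log hx0.ne'
    have d3 : HasDerivAt (fun y : ℝ => Real.log (1 - θ * y)) ((1 - θ * x)⁻¹ * -θ) x := by
      have := (Real.hasDerivAt_log hθx1'.ne').comp x
        (((hasDerivAt_id x).const_mul θ).const_sub 1)
      simpa [mul_comm, Function.comp_def] using this
    have d4 : HasDerivAt (fun y : ℝ => Real.log (θ * y)) ((θ * x)⁻¹ * θ) x := by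
      have := (Real.hasDerivAt_log hθx0).comp x ((hasDerivAt_id x).const_mul θ)
      simpa [mul_comm, Function.comp_def] using this
    have hd : HasDerivAt f'
        ((1 / C) * ((-(1 - x)⁻¹ - x⁻¹) / Real.log 2)
          - ((1 - θ * x)⁻¹ * -θ - (θ * x)⁻¹ * θ) / Real.log 2 * θ) x :=
      (((d1.sub d2).div_const _).const_mul (1 / C)).sub
        (((d3.sub d4).div_const _).mul_const θ)
    have heq : (1 / C) * ((-(1 - x)⁻¹ - x⁻¹) / Real.log 2)
          - ((1 - θ * x)⁻¹ * -θ - (θ * x)⁻¹ * θ) / Real.log 2 * θ = f'' x := by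
      simp only [hf''def]
      ring
    rw [heq] at hd
    exact hd.hasDerivWithinAt
  · -- sign of second derivative
    rw [hint]
    rintro x ⟨hx0, hx1⟩
    have hx1' : (0:ℝ) < 1 - x := by linarith
    have hθx1' : (0:ℝ) < 1 - θ * x := by nlinarith
    have hθx : (0:ℝ) < θ * x := by positivity
    have hxinv : (0:ℝ) < x⁻¹ := by positivity
    have e1 : θ * θ * (1 - θ * x)⁻¹ ≤ (1 / C) * (1 - x)⁻¹ := by
      rw [← div_eq_mul_inv, ← div_eq_mul_inv, div_le_div_iff₀ hθx1' hx1']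
      nlinarith [mul_pos hθ0 hx0, sq_nonneg (θ * x), mul_nonneg hθ0.le hx0.le]
    have e2 : θ * θ * (θ * x)⁻¹ ≤ (1 / C) * x⁻¹ := by
      have h : θ * θ * (θ * x)⁻¹ = θ * x⁻¹ := by
        field_simp
      rw [h]
      have : θ ≤ 1 / C := by linarith
      exact mul_le_mul_of_nonneg_right this hxinv.le
    have hnum : (1 / C) * (-(1 - x)⁻¹ - x⁻¹)
        - ((1 - θ * x)⁻¹ * -θ - (θ * x)⁻¹ * θ) * θ ≤ 0 := by nlinarith
    simp only [hf''def]
    exact div_nonpos_of_nonpos_of_nonneg hnum hL.le
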